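/- In the operad NAP ∘ q, parallel associativity holds in the case where s and s' lie in the same block C_s of π: the proof reduces, via the NAP commutation property (t∘_s u)∘_{root(u)} v = φ((t∘_s v)∘_{root(v)} u) and parallel associativity of q, to the identity ((γ_{C_s} ∘_s β) ∘_{s'} α) = ((γ_{C_s} ∘_{s'} α) ∘_s β). Formally: if s, s' are distinct elements of the same block C_s, then (X □_s Y) □_{s'} Z = (X □_{s'} Z) □_s Y for X ∈ NAP∘q[S], Y ∈ NAP∘q[T], Z ∈ NAP∘q[R]. -/
import Mathlib


/-- A labelled rooted tree with vertex set `supp` inside an ambient label type `V`,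
given by its root and its parent function (normalized to the identity outside
`supp`, and fixing the root). -/
structure LTree (V : Type) where
  supp : Finset V
  root : V
  parent : V → V

namespace LTree

variable {V : Type} [DecidableEq V]

/-- `t` is an honest rooted tree on its vertex set `t.supp`:  the root is a vertex,
the parent map fixes the root, sends vertices to vertices, every vertex reaches the
root by iterating the parent map (connectedness/acyclicity), and the parent map is
normalized to the identity outside the vertex set. -/
def IsTree (t : LTree V) : Prop :=
  t.root ∈ t.supp ∧ t.parent t.root = t.root ∧
    (∀ v ∈ t.supp, t.parent v ∈ t.supp ∧ ∃ n, t.parent^[n] v = t.root) ∧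
    (∀ v, v ∉ t.supp → t.parent v = v)

/-- The NAP partial composition `u ∘ₛ v`: replace the vertex `s` of `u` by the tree
`v`, reconnecting each edge of `u` arriving at `s` to the root of `v`. -/
def ncomp (u : LTree V) (s : V) (v : LTree V) : LTree V where
  supp := u.supp.erase s ∪ v.supp
  root := if u.root = s then v.root else u.root
  parent x :=
    if x ∈ u.supp.erase s then (if u.parent x = s then v.root else u.parent x)
    else if x ∈ v.supp then
      (if x = v.root then (if u.parent s = s then v.root else u.parent s) else v.parent x)
    else x

/-- Relabelling a tree along a bijection of the ambient label type. -/
def relabel (e : V ≃ V) (t : LTree V) : LTree V where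
  supp := t.supp.image e
  root := e t.root
  parent x := e (t.parent (e.symm x))

/-- The single-vertex tree on the vertex `a`. -/
def eta (a : V) : LTree V := ⟨{a}, a, fun x => x⟩

/-- The edges of `u` arriving at `s`, identified with the children of `s`. -/
def children (u : LTree V) (s : V) : Finset V :=
  (u.supp.erase s).filter (fun w => u.parent w = s)

/-- The tree `u ∘ₛᶠ v` for `f : In(s,u) → Ver(v)`: replace the vertex `s` of `u` by
the tree `v`, reconnecting each edge `a ∈ In(s,u)` to the vertex `f a` of `v`. -/
def fcomp (u : LTree V) (s : V) (v : LTree V) (f : V → V) : LTree V where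
  supp := u.supp.erase s ∪ v.supp
  root := if u.root = s then v.root else u.root
  parent x :=
    if x ∈ u.supp.erase s then (if u.parent x = s then f x else u.parent x)
    else if x ∈ v.supp then
      (if x = v.root then (if u.parent s = s then v.root else u.parent s) else v.parent x)
    else x

/-- The Pre-Lie partial composition `u ∘ₛ v := Σ_{f : In(s,u) → Ver(v)} u ∘ₛᶠ v`,
a formal linear combination of rooted trees. -/
noncomputable def plcomp (u : LTree V) (s : V) (v : LTree V) : LTree V →₀ ℚ :=
  ∑ f : {w // w ∈ children u s} → {x // x ∈ v.supp},
    Finsupp.single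
      (fcomp u s v (fun w => if h : w ∈ children u s then (f ⟨w, h⟩ : V) else v.root)) 1

/-- Bilinear extension of the Pre-Lie partial composition to formal sums. -/
noncomputable def plext (x : LTree V →₀ ℚ) (s : V) (y : LTree V →₀ ℚ) : LTree V →₀ ℚ :=
  x.sum fun t a => y.sum fun u b => (a * b) • plcomp t s u

end LTree

/-- A positive symmetric operad `q`, presented in "supported elements" form over an
ambient label type `V`: a carrier type `Q` of operations, each with a nonempty
finite support (its finite input set) in `V`, together with partial compositions
`∘ₛ`, units, and relabelling along bijections of `V`, satisfying the symmetric
operad axioms (parallel and nested associativity, naturality, unitality). -/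
structure POperad (V : Type) (Q : Type) [DecidableEq V] where
  supp : Q → Finset V
  comp : Q → V → Q → Q
  unit : V → Q
  relabel : (V ≃ V) → Q → Q
  supp_nonempty : ∀ x, (supp x).Nonempty
  supp_comp : ∀ x s y, s ∈ supp x → supp (comp x s y) = (supp x).erase s ∪ supp y
  supp_unit : ∀ a, supp (unit a) = {a}
  supp_relabel : ∀ e x, supp (relabel e x) = (supp x).image e
  parallel : ∀ x y z s s', s ∈ supp x → s' ∈ supp x → s ≠ s' →
    Disjoint (supp x) (supp y) → Disjoint (supp x) (supp z) →
    Disjoint (supp y) (supp z) →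
    comp (comp x s y) s' z = comp (comp x s' z) s y
  nested : ∀ x y z s t, s ∈ supp x → t ∈ supp y →
    Disjoint (supp x) (supp y) → Disjoint (supp x) (supp z) →
    Disjoint (supp y) (supp z) →
    comp (comp x s y) t z = comp x s (comp y t z)
  natural : ∀ e x s y, s ∈ supp x →
    relabel e (comp x s y) = comp (relabel e x) (e s) (relabel e y)
  natural_unit : ∀ e a, relabel e (unit a) = unit (e a)
  unit_left : ∀ a y, comp (unit a) a y = y
  unit_right : ∀ x s, s ∈ supp x → comp x s (unit s) = x

namespace LTree

variable {V Q : Type} [DecidableEq V] [DecidableEq Q]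

/-- Rename the single vertex `o` of a tree to `n`. -/
def rename (t : LTree Q) (o n : Q) : LTree Q where
  supp := insert n (t.supp.erase o)
  root := if t.root = o then n else t.root
  parent x :=
    if x = n then (if t.parent o = o then n else t.parent o)
    else if x ∈ t.supp.erase o then (if t.parent x = o then n else t.parent x)
    else x

/-- Relabel the vertices of a tree along a map `f` (injective on the vertex set). -/
noncomputable def mapV (f : Q → Q) (t : LTree Q) : LTree Q where
  supp := t.supp.image f
  root := f t.root
  parent x := if h : ∃ v, v ∈ t.supp ∧ f v = x then f (t.parent h.choose) else x

end LTree

namespace NAPofQ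

variable {V Q : Type} [DecidableEq V] [DecidableEq Q]

/-- An element of the composite species `NAP ∘ q` on the set `I`: a rooted tree
whose vertices are `q`-operations (the blocks `C` of a partition `π ⊢ I` decorated
by `γ_C ∈ q[C]`).  Validity: the underlying tree is an honest rooted tree and the
supports of the decorations of distinct vertices are disjoint (so that they form a
partition of the total support). -/
def Valid (q : POperad V Q) (X : LTree Q) : Prop :=
  X.IsTree ∧ ∀ c ∈ X.supp, ∀ c' ∈ X.supp, c ≠ c' → Disjoint (q.supp c) (q.supp c')

/-- The total support (underlying set `I`) of an element of `NAP ∘ q`. -/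
def tsupp (q : POperad V Q) (X : LTree Q) : Finset V :=
  X.supp.biUnion q.supp

/-- The block `C_s` of `X` containing `s`: the unique vertex of `X` whose
decoration has `s` in its support. -/
noncomputable def blockOf (q : POperad V Q) (X : LTree Q) (s : V) : Q :=
  if h : ∃ c, c ∈ X.supp ∧ s ∈ q.supp c then h.choose else X.root

/-- The partial composition `□ₛ` on `NAP ∘ q`:
`(t ⊗ ⊗_C γ_C) □ₛ (u ⊗ ⊗_B β_B) = (t ∘_{C_s} u) ⊗ ⊗_D α_D`, where the tree of the
first factor is NAP-composed at the block `C_s` containing `s` with the tree of the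
second factor, the decoration of the merged block `C_s ⊔ₛ B_root(u)` is
`γ_{C_s} ∘ₛ β_{B_root(u)}`, and all other decorations are kept. -/
noncomputable def box (q : POperad V Q) (X : LTree Q) (s : V) (Y : LTree Q) : LTree Q :=
  LTree.ncomp X (blockOf q X s)
    (LTree.rename Y Y.root (q.comp (blockOf q X s) s Y.root))

/-- The unit of `NAP ∘ q` on a singleton `{a}`: the one-vertex tree decorated by
the unit of `q`. -/
def unitT (q : POperad V Q) (a : V) : LTree Q := ⟨{q.unit a}, q.unit a, fun x => x⟩

end NAPofQ


section Aux

variable {V Q : Type} [DecidableEq V] [DecidableEq Q]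

lemma LTree.ext' {t t' : LTree Q} (h1 : t.supp = t'.supp) (h2 : t.root = t'.root)
    (h3 : t.parent = t'.parent) : t = t' := by
  cases t; cases t'; simp_all

lemma NAPofQ.blockOf_eq (q : POperad V Q) {X : LTree Q} {s : V} {c : Q}
    (hc : c ∈ X.supp) (hs : s ∈ q.supp c)
    (huniq : ∀ c' ∈ X.supp, s ∈ q.supp c' → c' = c) :
    NAPofQ.blockOf q X s = c := by
  unfold NAPofQ.blockOf
  have h : ∃ c, c ∈ X.supp ∧ s ∈ q.supp c := ⟨c, hc, hs⟩
  rw [dif_pos h]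
  exact huniq _ h.choose_spec.1 h.choose_spec.2

lemma LTree.key (u v w : LTree Q) (c c1 d1 m : Q)
    (hu : u.IsTree) (hv : v.IsTree) (hw : w.IsTree)
    (hc : c ∈ u.supp)
    (huv : Disjoint u.supp v.supp) (huw : Disjoint u.supp w.supp)
    (hvw : Disjoint v.supp w.supp)
    (h1u : c1 ∉ u.supp) (h1v : c1 ∉ v.supp) (h1w : c1 ∉ w.supp)
    (hdu : d1 ∉ u.supp) (hdv : d1 ∉ v.supp) (hdw : d1 ∉ w.supp)
    (hmu : m ∉ u.supp) (hmv : m ∉ v.supp) (hmw : m ∉ w.supp)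
    (h1d : c1 ≠ d1) (h1m : c1 ≠ m) (hdm : d1 ≠ m) :
    LTree.ncomp (LTree.ncomp u c (LTree.rename v v.root c1)) c1 (LTree.rename w w.root m)
      = LTree.ncomp (LTree.ncomp u c (LTree.rename w w.root d1)) d1 (LTree.rename v v.root m) := by
  obtain ⟨hur, hupr, humem, huout⟩ := hu
  obtain ⟨hvr, hvpr, hvmem, hvout⟩ := hv
  obtain ⟨hwr, hwpr, hwmem, hwout⟩ := hw
  have hru1 : u.root ≠ c1 := fun h => h1u (h ▸ hur)
  have hrud : u.root ≠ d1 := fun h => hdu (h ▸ hur)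
  have hcvr : c ≠ v.root := fun h => (Finset.disjoint_left.mp huv hc) (h ▸ hvr)
  have hcwr : c ≠ w.root := fun h => (Finset.disjoint_left.mp huw hc) (h ▸ hwr)
  have hc1 : c ≠ c1 := fun h => h1u (h ▸ hc)
  have hcd : c ≠ d1 := fun h => hdu (h ▸ hc)
  have hcm : c ≠ m := fun h => hmu (h ▸ hc)
  apply LTree.ext'
  · simp only [LTree.ncomp, LTree.rename]
    ext x
    simp only [Finset.mem_union, Finset.mem_erase, Finset.mem_insert]
    constructor
    · rintro (⟨hx1, (⟨hxc, hxu⟩ | (rfl | ⟨hxvr, hxv⟩))⟩ | (rfl | ⟨hxwr, hxw⟩))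
      · exact Or.inl ⟨fun h => hdu (h ▸ hxu), Or.inl ⟨hxc, hxu⟩⟩
      · exact absurd rfl hx1
      · exact Or.inr (Or.inr ⟨hxvr, hxv⟩)
      · exact Or.inr (Or.inl rfl)
      · exact Or.inl ⟨fun h => hdw (h ▸ hxw), Or.inr (Or.inr ⟨hxwr, hxw⟩)⟩
    · rintro (⟨hx1, (⟨hxc, hxu⟩ | (rfl | ⟨hxwr, hxw⟩))⟩ | (rfl | ⟨hxvr, hxv⟩))
      · exact Or.inl ⟨fun h => h1u (h ▸ hxu), Or.inl ⟨hxc, hxu⟩⟩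
      · exact absurd rfl hx1
      · exact Or.inr (Or.inr ⟨hxwr, hxw⟩)
      · exact Or.inr (Or.inl rfl)
      · exact Or.inl ⟨fun h => h1v (h ▸ hxv), Or.inr (Or.inr ⟨hxvr, hxv⟩)⟩
  · simp only [LTree.ncomp, LTree.rename]
    by_cases hrc : u.root = c <;> simp [hrc, hc1, hcd, hru1, hrud]
  · funext x
    simp only [LTree.ncomp, LTree.rename]
    by_cases hxu : x ∈ u.supp
    · have hxv : x ∉ v.supp := Finset.disjoint_left.mp huv hxu
      have hxw : x ∉ w.supp := Finset.disjoint_left.mp huw hxu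
      have hx1 : x ≠ c1 := fun h => h1u (h ▸ hxu)
      have hxd : x ≠ d1 := fun h => hdu (h ▸ hxu)
      have hxm : x ≠ m := fun h => hmu (h ▸ hxu)
      by_cases hxc : x = c
      · subst hxc
        simp [hx1, hxd, hxm, hxv, hxw, hcvr, hcwr]
      · have hpu : u.parent x ∈ u.supp := (humem x hxu).1
        have hp1 : u.parent x ≠ c1 := fun h => h1u (h ▸ hpu)
        have hpd : u.parent x ≠ d1 := fun h => hdu (h ▸ hpu)
        have hpm : u.parent x ≠ m := fun h => hmu (h ▸ hpu)
        by_cases hpc : u.parent x = c <;>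
          simp [hxu, hxc, hxv, hxw, hx1, hxd, hxm, hpc, hp1, hpd, hpm]
    · by_cases hxv : x ∈ v.supp
      · have hxw : x ∉ w.supp := Finset.disjoint_left.mp hvw hxv
        have hx1 : x ≠ c1 := fun h => h1v (h ▸ hxv)
        have hxd : x ≠ d1 := fun h => hdv (h ▸ hxv)
        have hxm : x ≠ m := fun h => hmv (h ▸ hxv)
        by_cases hxvr : x = v.root
        · subst hxvr
          simp [hx1, hxd, hxm, hxu, hxw]
        · have hpv : v.parent x ∈ v.supp := (hvmem x hxv).1
          have hp1 : v.parent x ≠ c1 := fun h => h1v (h ▸ hpv)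
          have hpm : v.parent x ≠ m := fun h => hmv (h ▸ hpv)
          by_cases hpr : v.parent x = v.root <;>
            simp [hxu, hxv, hxw, hx1, hxd, hxm, hxvr, hpr, hp1, hpm]
      · by_cases hxw : x ∈ w.supp
        · have hx1 : x ≠ c1 := fun h => h1w (h ▸ hxw)
          have hxd : x ≠ d1 := fun h => hdw (h ▸ hxw)
          have hxm : x ≠ m := fun h => hmw (h ▸ hxw)
          by_cases hxwr : x = w.root
          · subst hxwr
            simp [hx1, hxd, hxm, hxu, hxv]
          · have hpw : w.parent x ∈ w.supp := (hwmem x hxw).1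
            have hpd : w.parent x ≠ d1 := fun h => hdw (h ▸ hpw)
            have hpm : w.parent x ≠ m := fun h => hmw (h ▸ hpw)
            by_cases hpr : w.parent x = w.root <;>
              simp [hxu, hxv, hxw, hx1, hxd, hxm, hxwr, hpr, hpd, hpm]
        · by_cases hx1 : x = c1
          · subst hx1
            simp [hxu, hxv, hxw, h1d, h1m]
          · by_cases hxd : x = d1
            · subst hxd
              simp [hxu, hxv, hxw, h1d.symm, hdm]
            · by_cases hxm : x = m
              · subst hxm
                have hpcu : u.parent c ∈ u.supp := (humem c hc).1
                have hp1 : u.parent c ≠ c1 := fun h => h1u (h ▸ hpcu)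
                have hpd : u.parent c ≠ d1 := fun h => hdu (h ▸ hpcu)
                by_cases hpc : u.parent c = c <;>
                  simp [hmu, hmv, hmw, h1m.symm, hdm.symm, hc1.symm, hcd.symm, hpc,
                    hp1, hpd, hvpr, hwpr, hcm.symm, h1u, h1v, h1w, hdu, hdv, hdw]
              · simp [hxu, hxv, hxw, hx1, hxd, hxm]

end Aux

open NAPofQ in
/-- In the operad `NAP ∘ q`, parallel associativity holds in the case where `s` and
`s'` lie in the same block `C_s` of the partition underlying `X`: if `s ≠ s'` both
belong to the support of the decoration of one and the same vertex `c` of `X`, then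
`(X □ₛ Y) □ₛ' Z = (X □ₛ' Z) □ₛ Y`. -/
theorem NAPofQ_parallel_same_block {V Q : Type} [DecidableEq V] [DecidableEq Q]
    (q : POperad V Q) (X Y Z : LTree Q)
    (hX : Valid q X) (hY : Valid q Y) (hZ : Valid q Z)
    (hXY : Disjoint (tsupp q X) (tsupp q Y))
    (hXZ : Disjoint (tsupp q X) (tsupp q Z))
    (hYZ : Disjoint (tsupp q Y) (tsupp q Z))
    (s s' : V) (hss' : s ≠ s')
    (c : Q) (hc : c ∈ X.supp) (hs : s ∈ q.supp c) (hs' : s' ∈ q.supp c) :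
    box q (box q X s Y) s' Z = box q (box q X s' Z) s Y := by
  obtain ⟨hXt, hXd⟩ := hX
  obtain ⟨hYt, hYd⟩ := hY
  obtain ⟨hZt, hZd⟩ := hZ
  have hYr : Y.root ∈ Y.supp := hYt.1
  have hZr : Z.root ∈ Z.supp := hZt.1
  have hts : ∀ (W : LTree Q), ∀ a ∈ W.supp, q.supp a ⊆ tsupp q W :=
    fun W a ha => Finset.subset_biUnion_of_mem q.supp ha
  set c1 := q.comp c s Y.root with hc1def
  set d1 := q.comp c s' Z.root with hd1def
  set m := q.comp c1 s' Z.root with hmdef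
  have hsc1 : q.supp c1 = (q.supp c).erase s ∪ q.supp Y.root := q.supp_comp c s Y.root hs
  have hsd1 : q.supp d1 = (q.supp c).erase s' ∪ q.supp Z.root := q.supp_comp c s' Z.root hs'
  have hs'c1 : s' ∈ q.supp c1 := by
    rw [hsc1]; exact Finset.mem_union_left _ (Finset.mem_erase.mpr ⟨Ne.symm hss', hs'⟩)
  have hsd : s ∈ q.supp d1 := by
    rw [hsd1]; exact Finset.mem_union_left _ (Finset.mem_erase.mpr ⟨hss', hs⟩)
  have hsm : q.supp m = (q.supp c1).erase s' ∪ q.supp Z.root := q.supp_comp c1 s' Z.root hs'c1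
  obtain ⟨y0, hy0⟩ := q.supp_nonempty Y.root
  obtain ⟨z0, hz0⟩ := q.supp_nonempty Z.root
  have hsX : s ∈ tsupp q X := hts X c hc hs
  have hs'X : s' ∈ tsupp q X := hts X c hc hs'
  have hy0Y : y0 ∈ tsupp q Y := hts Y Y.root hYr hy0
  have hz0Z : z0 ∈ tsupp q Z := hts Z Z.root hZr hz0
  have dXY := fun {a} (h : a ∈ tsupp q X) => Finset.disjoint_left.mp hXY h
  have dXZ := fun {a} (h : a ∈ tsupp q X) => Finset.disjoint_left.mp hXZ h
  have dYZ := fun {a} (h : a ∈ tsupp q Y) => Finset.disjoint_left.mp hYZ h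
  have hy0c1 : y0 ∈ q.supp c1 := by rw [hsc1]; exact Finset.mem_union_right _ hy0
  have hz0d1 : z0 ∈ q.supp d1 := by rw [hsd1]; exact Finset.mem_union_right _ hz0
  have hy0s' : y0 ≠ s' := fun h => dXY hs'X (h ▸ hy0Y)
  have hy0m : y0 ∈ q.supp m := by
    rw [hsm]; exact Finset.mem_union_left _ (Finset.mem_erase.mpr ⟨hy0s', hy0c1⟩)
  have hz0m : z0 ∈ q.supp m := by rw [hsm]; exact Finset.mem_union_right _ hz0
  have hsnc1 : s ∉ q.supp c1 := by
    rw [hsc1]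
    intro h
    rcases Finset.mem_union.mp h with h | h
    · exact (Finset.mem_erase.mp h).1 rfl
    · exact dXY hsX (hts Y Y.root hYr h)
  have hs'nd1 : s' ∉ q.supp d1 := by
    rw [hsd1]
    intro h
    rcases Finset.mem_union.mp h with h | h
    · exact (Finset.mem_erase.mp h).1 rfl
    · exact dXZ hs'X (hts Z Z.root hZr h)
  have hs'nm : s' ∉ q.supp m := by
    rw [hsm]
    intro h
    rcases Finset.mem_union.mp h with h | h
    · exact (Finset.mem_erase.mp h).1 rfl
    · exact dXZ hs'X (hts Z Z.root hZr h)
  have hsnm : s ∉ q.supp m := by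
    rw [hsm]
    intro h
    rcases Finset.mem_union.mp h with h | h
    · exact hsnc1 (Finset.mem_erase.mp h).2
    · exact dXZ hsX (hts Z Z.root hZr h)
  have h1X : c1 ∉ X.supp := fun h => dXY (hts X c1 h hy0c1) hy0Y
  have h1Y : c1 ∉ Y.supp := fun h => dXY hs'X (hts Y c1 h hs'c1)
  have h1Z : c1 ∉ Z.supp := fun h => dYZ hy0Y (hts Z c1 h hy0c1)
  have hdX : d1 ∉ X.supp := fun h => dXZ (hts X d1 h hz0d1) hz0Z
  have hdY : d1 ∉ Y.supp := fun h => dYZ (hts Y d1 h hz0d1) hz0Z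
  have hdZ : d1 ∉ Z.supp := fun h => dXZ hsX (hts Z d1 h hsd)
  have hmX : m ∉ X.supp := fun h => dXY (hts X m h hy0m) hy0Y
  have hmY : m ∉ Y.supp := fun h => dYZ (hts Y m h hz0m) hz0Z
  have hmZ : m ∉ Z.supp := fun h => dYZ hy0Y (hts Z m h hy0m)
  have h1d : c1 ≠ d1 := fun h => hs'nd1 (h ▸ hs'c1)
  have h1m : c1 ≠ m := fun h => hs'nm (h ▸ hs'c1)
  have hdm : d1 ≠ m := fun h => hsnm (h ▸ hsd)
  have dUV : Disjoint X.supp Y.supp := Finset.disjoint_left.mpr fun {a} haX haY =>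
    dXY (hts X a haX (q.supp_nonempty a).choose_spec) (hts Y a haY (q.supp_nonempty a).choose_spec)
  have dUW : Disjoint X.supp Z.supp := Finset.disjoint_left.mpr fun {a} haX haZ =>
    dXZ (hts X a haX (q.supp_nonempty a).choose_spec) (hts Z a haZ (q.supp_nonempty a).choose_spec)
  have dVW : Disjoint Y.supp Z.supp := Finset.disjoint_left.mpr fun {a} haY haZ =>
    dYZ (hts Y a haY (q.supp_nonempty a).choose_spec) (hts Z a haZ (q.supp_nonempty a).choose_spec)
  have hbX : blockOf q X s = c := NAPofQ.blockOf_eq q hc hs fun c' hc' hsc' => by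
    by_contra h
    exact (Finset.disjoint_left.mp (hXd c' hc' c hc h) hsc') hs
  have hbX' : blockOf q X s' = c := NAPofQ.blockOf_eq q hc hs' fun c' hc' hsc' => by
    by_contra h
    exact (Finset.disjoint_left.mp (hXd c' hc' c hc h) hsc') hs'
  have hA : box q X s Y = LTree.ncomp X c (LTree.rename Y Y.root c1) := by
    simp only [NAPofQ.box, hbX, hc1def]
  have hB : box q X s' Z = LTree.ncomp X c (LTree.rename Z Z.root d1) := by
    simp only [NAPofQ.box, hbX', hd1def]
  have hbA : blockOf q (LTree.ncomp X c (LTree.rename Y Y.root c1)) s' = c1 := by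
    apply NAPofQ.blockOf_eq q (c := c1) _ hs'c1
    · intro c' hc' hsc'
      simp only [LTree.ncomp, LTree.rename, Finset.mem_union, Finset.mem_erase,
        Finset.mem_insert] at hc'
      rcases hc' with ⟨hne, hmem⟩ | rfl | ⟨hne, hmem⟩
      · exact absurd hs' (Finset.disjoint_left.mp (hXd c' hmem c hc hne) hsc')
      · rfl
      · exact absurd (hts Y c' hmem hsc') (dXY hs'X)
    · simp [LTree.ncomp, LTree.rename]
  have hbB : blockOf q (LTree.ncomp X c (LTree.rename Z Z.root d1)) s = d1 := by
    apply NAPofQ.blockOf_eq q (c := d1) _ hsd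
    · intro c' hc' hsc'
      simp only [LTree.ncomp, LTree.rename, Finset.mem_union, Finset.mem_erase,
        Finset.mem_insert] at hc'
      rcases hc' with ⟨hne, hmem⟩ | rfl | ⟨hne, hmem⟩
      · exact absurd hs (Finset.disjoint_left.mp (hXd c' hmem c hc hne) hsc')
      · rfl
      · exact absurd (hts Z c' hmem hsc') (fun hh => dXZ hsX hh)
    · simp [LTree.ncomp, LTree.rename]
  have hpar : q.comp d1 s Y.root = m := by
    rw [hmdef, hc1def, hd1def]
    exact (q.parallel c Y.root Z.root s s' hs hs' hss'
      (Disjoint.mono (hts X c hc) (hts Y Y.root hYr) hXY)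
      (Disjoint.mono (hts X c hc) (hts Z Z.root hZr) hXZ)
      (Disjoint.mono (hts Y Y.root hYr) (hts Z Z.root hZr) hYZ)).symm
  have hL : box q (box q X s Y) s' Z
      = LTree.ncomp (LTree.ncomp X c (LTree.rename Y Y.root c1)) c1
          (LTree.rename Z Z.root m) := by
    rw [hA]; simp only [NAPofQ.box, hbA, hmdef]
  have hR : box q (box q X s' Z) s Y
      = LTree.ncomp (LTree.ncomp X c (LTree.rename Z Z.root d1)) d1
          (LTree.rename Y Y.root m) := by
    rw [hB]; simp only [NAPofQ.box, hbB, hpar]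
  rw [hL, hR]
  exact LTree.key X Y Z c c1 d1 m hXt hYt hZt hc dUV dUW dVW
    h1X h1Y h1Z hdX hdY hdZ hmX hmY hmZ h1d h1m hdm
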